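/- Let Z be an n-dimensional naturally graded p-filiform complex Zinbiel algebra of first type, in an adapted basis {e_1,…,e_{n−p},f_1,…,f_p} normalized so that f_{s_1+⋯+s_{t−1}+i} ∘ e_1 = f_{s_1+⋯+s_t+i} for 1 ≤ i ≤ s_{t+1} and f_{s_1+⋯+s_{t−1}+i} ∘ e_1 = 0 for s_{t+1}+1 ≤ i ≤ s_t (1 ≤ t ≤ n−p−1). Then for all k ≥ 0 and all 1 ≤ j ≤ n−p−k: f_{s_1+⋯+s_k+i} ∘ e_j = (1/j!) f_{s_1+⋯+s_{k+j}+i} for 1 ≤ i ≤ s_{k+j+1}, and f_{s_1+⋯+s_k+i} ∘ e_j = 0 for s_{k+j+1}+1 ≤ i ≤ s_{k+j}. -/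
import Mathlib


open Module Submodule

/-- The Zinbiel identity for a bilinear operation `mul` on a complex vector space:
`(x∘y)∘z = x∘(y∘z) + x∘(z∘y)`. -/
def IsZinbiel {Z : Type*} [AddCommGroup Z] [Module ℂ Z] (mul : Z →ₗ[ℂ] Z →ₗ[ℂ] Z) : Prop :=
  ∀ x y z : Z, mul (mul x y) z = mul x (mul y z) + mul x (mul z y)
/-- The square `Z ∘ Z` of the algebra. -/
def algSq {Z : Type*} [AddCommGroup Z] [Module ℂ Z] (mul : Z →ₗ[ℂ] Z →ₗ[ℂ] Z) :
    Submodule ℂ Z :=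
  Submodule.span ℂ {z | ∃ x y, z = mul x y}
/-- `C(Z) = (n-p, 1, …, 1)` (`p`-filiformity) expressed via the left multiplication
operators: for every `x ∉ Z²` the nilpotent operator `L_x` satisfies `L_x^(n-p) = 0`
and has rank at most `n-p-1`; this says exactly that the Jordan type of every `L_x`
is lexicographically at most `(n-p, 1, …, 1)`. -/
def CharSeqMax {Z : Type*} [AddCommGroup Z] [Module ℂ Z]
    (mul : Z →ₗ[ℂ] Z →ₗ[ℂ] Z) (n p : ℕ) : Prop :=
  ∀ x : Z, x ∉ algSq mul →
    ((mul x : Module.End ℂ Z) ^ (n - p) = 0) ∧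
      Module.finrank ℂ (LinearMap.range (mul x)) ≤ n - p - 1
/-- The adapted family `e_1, …, e_m, f_1, …, f_p` indexed by `Fin m ⊕ Fin p`. -/
def adaptedFam {Z : Type*} (m p : ℕ) (e f : ℕ → Z) : Fin m ⊕ Fin p → Z :=
  Sum.elim (fun i => e ((i : ℕ) + 1)) (fun j => f ((j : ℕ) + 1))
/-- `psum s k = s 1 + s 2 + ⋯ + s k`. -/
def psum (s : ℕ → ℕ) (k : ℕ) : ℕ := ∑ j ∈ Finset.Icc 1 k, s j

/-- Proposition (`fej`): in the normalized adapted basis, for all `k ≥ 0` and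
`1 ≤ j ≤ n-p-k`: `f_{s_1+⋯+s_k+i} ∘ e_j = (1/j!) f_{s_1+⋯+s_{k+j}+i}` for
`1 ≤ i ≤ s_{k+j+1}`, and `f_{s_1+⋯+s_k+i} ∘ e_j = 0` for `s_{k+j+1}+1 ≤ i ≤ s_{k+j}`. -/
theorem graded_p_filiform_f_e_products
    {Z : Type*} [AddCommGroup Z] [Module ℂ Z]
    (mul : Z →ₗ[ℂ] Z →ₗ[ℂ] Z) (hzin : IsZinbiel mul)
    (n p : ℕ) (hpn : p < n)
    (e f : ℕ → Z)
    -- `{e_1, …, e_{n-p}, f_1, …, f_p}` is a basis of the `n`-dimensional algebra `Z`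
    (hli : LinearIndependent ℂ (adaptedFam (n - p) p e f))
    (hsp : Submodule.span ℂ (Set.range (adaptedFam (n - p) p e f)) = ⊤)
    -- the basis is adapted of first type: `e_1 ∘ e_i = e_{i+1}`, `e_1 ∘ e_{n-p} = 0`,
    -- `e_1 ∘ f_j = 0`
    (hee : ∀ i, 1 ≤ i → i ≤ n - p - 1 → mul (e 1) (e i) = e (i + 1))
    (hetop : mul (e 1) (e (n - p)) = 0)
    (hef : ∀ j, 1 ≤ j → j ≤ p → mul (e 1) (f j) = 0)
    -- the natural gradation `Z = Z_1 ⊕ ⋯ ⊕ Z_{n-p}` : `W i` is the `i`-th component,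
    -- the gradation is multiplicative and generated in degree one
    -- (`Z_{i+1} = Z_1 ∘ Z_i`, coming from `Z_i = Z^i/Z^{i+1}`), and `e_i ∈ Z_i`
    (W : ℕ → Submodule ℂ Z)
    (hW0 : W 0 = ⊥)
    (hWhigh : ∀ i, n - p < i → W i = ⊥)
    (hWint : DirectSum.IsInternal W)
    (hWmul : ∀ i j, ∀ x ∈ W i, ∀ y ∈ W j, mul x y ∈ W (i + j))
    (hWgen : ∀ i, 1 ≤ i → W (i + 1) = Submodule.span ℂ {z | ∃ x ∈ W 1, ∃ y ∈ W i, z = mul x y})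
    (heW : ∀ i, 1 ≤ i → i ≤ n - p → e i ∈ W i)
    -- `Z` is `p`-filiform with characteristic vector `e_1 ∉ Z²`
    (hfil : CharSeqMax mul n p)
    (he1sq : e 1 ∉ algSq mul)
    -- `s_i = dim Z_i - 1` and
    -- `Z_i = ⟨e_i, f_{s_1+⋯+s_{i-1}+1}, …, f_{s_1+⋯+s_i}⟩` for `1 ≤ i ≤ n-p`
    (s : ℕ → ℕ) (hs0 : s 0 = 0) (hshigh : ∀ i, n - p < i → s i = 0)
    (hsum : psum s (n - p) = p)
    (hWspan : ∀ i, 1 ≤ i → i ≤ n - p →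
      W i = Submodule.span ℂ (insert (e i) (f '' Set.Icc (psum s (i - 1) + 1) (psum s i))))
    -- the basis is normalized so that `f_{s_1+⋯+s_{t-1}+i} ∘ e_1 = f_{s_1+⋯+s_t+i}`
    -- for `1 ≤ i ≤ s_{t+1}` and `= 0` for `s_{t+1}+1 ≤ i ≤ s_t`
    (hnorm : ∀ t i, 1 ≤ t → t ≤ n - p - 1 →
      (1 ≤ i → i ≤ s (t + 1) → mul (f (psum s (t - 1) + i)) (e 1) = f (psum s t + i)) ∧
      (s (t + 1) + 1 ≤ i → i ≤ s t → mul (f (psum s (t - 1) + i)) (e 1) = 0))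
    :
    ∀ k j, 1 ≤ j → j ≤ n - p - k →
      (∀ i, 1 ≤ i → i ≤ s (k + j + 1) →
        mul (f (psum s k + i)) (e j) = ((j.factorial : ℂ))⁻¹ • f (psum s (k + j) + i)) ∧
      (∀ i, s (k + j + 1) + 1 ≤ i → i ≤ s (k + j) →
        mul (f (psum s k + i)) (e j) = 0) := by
  
  intro k j hj1 hj2
  set m := n - p with hm
  have hm1 : 1 ≤ m := by omega
  -- psum facts
  have hpsucc : ∀ t : ℕ, psum s (t + 1) = psum s t + s (t + 1) := by
    intro t
    rw [psum, psum, Finset.sum_Icc_succ_top (by omega : 1 ≤ t + 1)]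
  have hpmono : ∀ a b : ℕ, a ≤ b → psum s a ≤ psum s b := by
    intro a b hab
    exact Finset.sum_le_sum_of_subset (Finset.Icc_subset_Icc_right hab)
  have hple : ∀ t, t ≤ m → psum s t ≤ p := fun t ht => hsum ▸ hpmono t m ht
  -- f's are nonzero
  have hfnz : ∀ q, 1 ≤ q → q ≤ p → f q ≠ 0 := by
    intro q h1 h2 hq
    apply hli.ne_zero (Sum.inr ⟨q - 1, by omega⟩)
    simpa [adaptedFam, Nat.sub_add_cancel h1] using hq
  -- membership of f's in graded pieces
  have hfW : ∀ t, 1 ≤ t → t ≤ m → ∀ i, 1 ≤ i → i ≤ s t →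
      f (psum s (t - 1) + i) ∈ W t := by
    intro t h1 h2 i hi1 hi2
    rw [hWspan t h1 h2]
    apply Submodule.subset_span
    apply Set.mem_insert_of_mem
    refine ⟨psum s (t - 1) + i, ⟨by omega, ?_⟩, rfl⟩
    have h3 := hpsucc (t - 1)
    rw [Nat.sub_add_cancel h1] at h3
    omega
  -- disjointness of graded pieces
  have hdisj : ∀ a b : ℕ, a ≠ b → ∀ x : Z, x ∈ W a → x ∈ W b → x = 0 := by
    intro a b hab x ha hb
    exact Submodule.disjoint_def.mp
      (hWint.submodule_iSupIndep.pairwiseDisjoint hab) x ha hb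
  have he1W : e 1 ∈ W 1 := heW 1 le_rfl hm1
  -- monotonicity of s
  have hsmono1 : ∀ t, 1 ≤ t → t + 1 ≤ m → s (t + 1) ≤ s t := by
    intro t ht htm
    by_contra hlt
    push_neg at hlt
    have heq := (hnorm t (s t + 1) ht (by omega)).1 (by omega) (by omega)
    have hidx : psum s (t - 1) + (s t + 1) = psum s t + 1 := by
      have h3 := hpsucc (t - 1)
      rw [Nat.sub_add_cancel ht] at h3
      omega
    rw [hidx] at heq
    have h1 : f (psum s t + 1) ∈ W (t + 1) := by
      have := hfW (t + 1) (by omega) htm 1 le_rfl (by omega)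
      simpa using this
    have h2 : mul (f (psum s t + 1)) (e 1) ∈ W (t + 1 + 1) :=
      hWmul (t + 1) 1 _ h1 _ he1W
    rw [heq] at h2
    have h3 : f (psum s t + (s t + 1)) ∈ W (t + 1) := by
      have := hfW (t + 1) (by omega) htm (s t + 1) (by omega) (by omega)
      simpa using this
    have h4 := hdisj (t + 1 + 1) (t + 1) (by omega) _ h2 h3
    have h5 := hpsucc t
    exact hfnz _ (by omega) (by have := hple (t + 1) htm; omega) h4
  have hsanti : ∀ a b, 1 ≤ a → a ≤ b → s b ≤ s a := by
    intro a b ha hab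
    induction b with
    | zero => omega
    | succ b ih =>
      rcases Nat.lt_or_ge m (b + 1) with h | h
      · rw [hshigh _ (by omega)]; omega
      · rcases eq_or_lt_of_le hab with h' | h'
        · rw [h']
        · exact le_trans (hsmono1 b (by omega) h) (ih (by omega))
  -- products e_j ∘ e_1
  have heE : ∀ j, 1 ≤ j → j ≤ m - 1 → mul (e j) (e 1) = (j : ℂ) • e (j + 1) := by
    intro j
    induction j with
    | zero => omega
    | succ j ih =>
      intro _ hj
      rcases Nat.eq_zero_or_pos j with rfl | hj0
      · simpa using hee 1 le_rfl (by omega)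
      · have hej : mul (e 1) (e j) = e (j + 1) := hee j hj0 (by omega)
        have hzb := hzin (e 1) (e j) (e 1)
        rw [hej] at hzb
        rw [hzb, ih hj0 (by omega), map_smul,
          hee (j + 1) (by omega) (by omega)]
        push_cast
        rw [add_smul, one_smul]
  -- base case j = 1
  have hbase : ∀ k, 1 ≤ m - k →
      (∀ i, 1 ≤ i → i ≤ s (k + 2) →
        mul (f (psum s k + i)) (e 1) = f (psum s (k + 1) + i)) ∧
      (∀ i, s (k + 2) + 1 ≤ i → i ≤ s (k + 1) →
        mul (f (psum s k + i)) (e 1) = 0) := by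
    intro k hk
    rcases Nat.lt_or_ge (k + 1) m with hlt | hge
    · have h := fun i => hnorm (k + 1) i (by omega) (by omega)
      constructor
      · intro i h1 h2
        have := (h i).1 h1 (by rw [show k + 1 + 1 = k + 2 from rfl]; exact h2)
        simpa using this
      · intro i h1 h2
        have := (h i).2 (by rw [show k + 1 + 1 = k + 2 from rfl]; exact h1) h2
        simpa using this
    · constructor
      · intro i h1 h2
        have h0 : s (k + 2) = 0 := hshigh _ (by omega)
        exact absurd h2 (by omega)
      · intro i h1 h2
        have hfm : f (psum s k + i) ∈ W (k + 1) := by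
          have := hfW (k + 1) (by omega) (by omega) i (by omega) h2
          simpa using this
        have hmem := hWmul (k + 1) 1 _ hfm _ he1W
        rw [hWhigh (k + 1 + 1) (by omega)] at hmem
        simpa using hmem
  -- main induction on j
  have key : ∀ j k, 1 ≤ j → j ≤ m - k →
      (∀ i, 1 ≤ i → i ≤ s (k + j + 1) →
        mul (f (psum s k + i)) (e j) = ((j.factorial : ℂ))⁻¹ • f (psum s (k + j) + i)) ∧
      (∀ i, s (k + j + 1) + 1 ≤ i → i ≤ s (k + j) →
        mul (f (psum s k + i)) (e j) = 0) := by
    intro j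
    induction j with
    | zero => intro k h; exact absurd h (by omega)
    | succ j ih =>
      intro k hj1 hjk
      rcases Nat.eq_zero_or_pos j with rfl | hj0
      · have hb := hbase k (by omega)
        constructor
        · intro i h1 h2
          have h2' : i ≤ s (k + 2) := by
            rw [show k + 2 = k + (0 + 1) + 1 by omega]; exact h2
          rw [hb.1 i h1 h2']
          norm_num [Nat.factorial]
        · intro i h1 h2
          refine hb.2 i ?_ ?_
          · rw [show k + 2 = k + (0 + 1) + 1 by omega]; exact h1
          · rw [show k + 1 = k + (0 + 1) by omega]; exact h2
      · have IH := ih (k + 1) hj0 (by omega)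
        have hb := hbase k (by omega)
        have hej1 : mul (e 1) (e j) = e (j + 1) := hee j hj0 (by omega)
        have hejE : mul (e j) (e 1) = (j : ℂ) • e (j + 1) := heE j hj0 (by omega)
        have hjne : ((j : ℂ) + 1) ≠ 0 := by
          have : ((j : ℂ) + 1) = ((j + 1 : ℕ) : ℂ) := by push_cast; ring
          rw [this, Ne, Nat.cast_eq_zero]
          omega
        have hid : ∀ x : Z, mul (mul x (e 1)) (e j)
            = ((j : ℂ) + 1) • mul x (e (j + 1)) := by
          intro x
          rw [hzin x (e 1) (e j), hej1, hejE, map_smul, add_smul, one_smul]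
          abel
        have hjfac : ((j + 1).factorial : ℂ) = ((j : ℂ) + 1) * (j.factorial : ℂ) := by
          rw [Nat.factorial_succ]; push_cast; ring
        rw [show k + (j + 1) = k + 1 + j by omega]
        constructor
        · intro i h1 h2
          have hstep1 : mul (f (psum s k + i)) (e 1) = f (psum s (k + 1) + i) :=
            hb.1 i h1 (le_trans h2 (hsanti (k + 2) (k + 1 + j + 1) (by omega) (by omega)))
          have hstep2 := IH.1 i h1 h2
          have h4 := hid (f (psum s k + i))
          rw [hstep1, hstep2] at h4
          have h5 : mul (f (psum s k + i)) (e (j + 1))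
              = ((j : ℂ) + 1)⁻¹ • (j.factorial : ℂ)⁻¹ • f (psum s (k + 1 + j) + i) := by
            rw [h4, inv_smul_smul₀ hjne]
          rw [h5, smul_smul, ← mul_inv, ← hjfac]
        · intro i h1 h2
          rcases Nat.lt_or_ge (s (k + 2)) i with hgt | hle
          · have h0 : mul (f (psum s k + i)) (e 1) = 0 :=
              hb.2 i (by omega)
                (le_trans h2 (hsanti (k + 1) (k + 1 + j) (by omega) (by omega)))
            have h4 := hid (f (psum s k + i))
            rw [h0] at h4
            simp only [map_zero, LinearMap.zero_apply] at h4
            exact (smul_eq_zero.mp h4.symm).resolve_left hjne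
          · have hstep1 : mul (f (psum s k + i)) (e 1) = f (psum s (k + 1) + i) :=
              hb.1 i (by omega) hle
            have hstep2 := IH.2 i h1 h2
            have h4 := hid (f (psum s k + i))
            rw [hstep1, hstep2] at h4
            exact (smul_eq_zero.mp h4.symm).resolve_left hjne
  exact key j k hj1 hj2
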